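/- For an SU(n) bundle V (c_1(V) = 0, trivial determinant), the third Chern class of the second exterior power satisfies c_3(∧²V) = (n − 4)·c_3(V). -/

import Mathlib

open Finset MvPolynomial

/-- The third elementary-symmetric expression in a family of "Chern roots". -/
def esymm3 {α A : Type*} [DecidableEq α] [CommRing A] (t : Finset α) (f : α → A) : A :=
  ∑ u ∈ t.powersetCard 3, ∏ a ∈ u, f a

private theorem newton_poly (σ : Type*) [Fintype σ] :
    6 * esymm σ ℤ 3 = psum σ ℤ 1 ^ 3 - 3 * psum σ ℤ 1 * psum σ ℤ 2 + 2 * psum σ ℤ 3 := by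
  have h3 := mul_esymm_eq_sum σ ℤ 3
  have h2 := mul_esymm_eq_sum σ ℤ 2
  have e2 : ((Finset.HasAntidiagonal.antidiagonal 2).filter (fun a => a.1 < 2) : Finset (ℕ×ℕ)) = {(0,2),(1,1)} := by decide
  have e3 : ((Finset.HasAntidiagonal.antidiagonal 3).filter (fun a => a.1 < 3) : Finset (ℕ×ℕ)) = {(0,3),(1,2),(2,1)} := by decide
  rw [e2] at h2; rw [e3] at h3
  simp [Finset.sum_insert, esymm_zero, esymm_one, psum_one] at h2 h3
  rw [psum_one]
  linear_combination 2 * h3 + (∑ i : σ, (X i : MvPolynomial σ ℤ)) * h2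

private theorem newton2_poly (σ : Type*) [Fintype σ] :
    2 * esymm σ ℤ 2 = psum σ ℤ 1 ^ 2 - psum σ ℤ 2 := by
  have h2 := mul_esymm_eq_sum σ ℤ 2
  have e2 : ((Finset.HasAntidiagonal.antidiagonal 2).filter (fun a => a.1 < 2) : Finset (ℕ×ℕ)) = {(0,2),(1,1)} := by decide
  rw [e2] at h2
  simp [Finset.sum_insert, esymm_zero, esymm_one, psum_one] at h2
  rw [psum_one]
  linear_combination h2

private theorem newton6 {ι A : Type*} [Fintype ι] [DecidableEq ι] [CommRing A] (f : ι → A) :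
    6 * ∑ u ∈ (Finset.univ : Finset ι).powersetCard 3, ∏ a ∈ u, f a
      = (∑ i, f i)^3 - 3*(∑ i, f i)*(∑ i, f i^2) + 2*(∑ i, f i^3) := by
  have h := congrArg (aeval f) (newton_poly ι)
  simpa [esymm, psum, map_sum, map_prod] using h

private theorem newton2 {ι A : Type*} [Fintype ι] [DecidableEq ι] [CommRing A] (f : ι → A) :
    2 * ∑ u ∈ (Finset.univ : Finset ι).powersetCard 2, ∏ a ∈ u, f a
      = (∑ i, f i)^2 - (∑ i, f i^2) := by
  have h := congrArg (aeval f) (newton2_poly ι)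
  simpa [esymm, psum, map_sum, map_prod] using h

private theorem esymm3_subtype {α A : Type*} [DecidableEq α] [CommRing A] (t : Finset α) (f : α → A) :
    (∑ u ∈ (Finset.univ : Finset {x // x ∈ t}).powersetCard 3, ∏ a ∈ u, f a.val)
      = ∑ u ∈ t.powersetCard 3, ∏ a ∈ u, f a := by
  conv_rhs => rw [← Finset.attach_map_val (s := t)]
  rw [Finset.powersetCard_map, Finset.sum_map, Finset.univ_eq_attach]
  apply Finset.sum_congr rfl
  intro u _
  show _ = ∏ a ∈ (Finset.mapEmbedding _) u, f a
  rw [Finset.mapEmbedding_apply, Finset.prod_map]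
  rfl

private theorem psum_subtype {α A : Type*} [DecidableEq α] [CommRing A] (t : Finset α) (f : α → A) :
    (∑ a : {x // x ∈ t}, f a.val) = ∑ a ∈ t, f a := by
  rw [Finset.univ_eq_attach]
  exact Finset.sum_attach t f

private theorem pair_split {n : ℕ} {A : Type*} [CommRing A] (F : Fin n → Fin n → A)
    (hF : ∀ i j, F i j = F j i) :
    2 * ∑ p ∈ (Finset.univ : Finset (Fin n × Fin n)).filter (fun p => p.1 < p.2), F p.1 p.2
      = (∑ i, ∑ j, F i j) - ∑ i, F i i := by
  have hswap : ∑ p ∈ (Finset.univ : Finset (Fin n × Fin n)).filter (fun p => p.1 < p.2), F p.1 p.2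
      = ∑ p ∈ (Finset.univ : Finset (Fin n × Fin n)).filter (fun p => p.2 < p.1), F p.1 p.2 := by
    apply Finset.sum_bij' (fun p _ => Prod.swap p) (fun p _ => Prod.swap p)
    · intro a ha; simp at ha ⊢; exact ha
    · intro a ha; simp at ha ⊢; exact ha
    · intro a _; simp
    · intro a _; simp
    · intro a _; exact hF a.1 a.2
  have htot : ∑ p ∈ (Finset.univ : Finset (Fin n × Fin n)).filter (fun p => p.1 < p.2), F p.1 p.2
      + ∑ p ∈ (Finset.univ : Finset (Fin n × Fin n)).filter (fun p => ¬ p.1 < p.2), F p.1 p.2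
      = ∑ i, ∑ j, F i j := by
    rw [Finset.sum_filter_add_sum_filter_not]
    exact Fintype.sum_prod_type _
  have hdiag : ∑ p ∈ (Finset.univ : Finset (Fin n × Fin n)).filter (fun p => p.1 = p.2), F p.1 p.2
      = ∑ i, F i i := by
    rw [Finset.sum_filter, Fintype.sum_prod_type]
    simp
  have hsplit : ∑ p ∈ (Finset.univ : Finset (Fin n × Fin n)).filter (fun p => ¬ p.1 < p.2), F p.1 p.2
      = ∑ p ∈ (Finset.univ : Finset (Fin n × Fin n)).filter (fun p => p.2 < p.1), F p.1 p.2
      + ∑ i, F i i := by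
    have h1 : (Finset.univ : Finset (Fin n × Fin n)).filter (fun p => ¬ p.1 < p.2)
        = (Finset.univ : Finset (Fin n × Fin n)).filter (fun p => p.2 < p.1)
          ∪ (Finset.univ : Finset (Fin n × Fin n)).filter (fun p => p.1 = p.2) := by
      rw [← Finset.filter_or]
      apply Finset.filter_congr
      intro p _
      constructor
      · intro h
        rcases lt_or_eq_of_le (not_lt.mp h) with h' | h'
        · exact Or.inl h'
        · exact Or.inr h'.symm
      · rintro (h | h)
        · exact not_lt.mpr h.le
        · rw [h]; exact lt_irrefl _
    rw [h1, Finset.sum_union, hdiag]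
    rw [Finset.disjoint_filter]
    intro p _ h h'
    rw [h'] at h
    exact lt_irrefl _ h
  rw [two_mul]
  nth_rw 2 [hswap]
  linear_combination htot - hsplit

private theorem double_sum_one {n : ℕ} {A : Type*} [CommRing A] (f : Fin n → A) :
    ∑ i, ∑ j, (f i + f j) = 2*(n:A)*(∑ i, f i) := by
  simp_rw [Finset.sum_add_distrib, Finset.sum_const, Finset.card_univ, Fintype.card_fin,
    nsmul_eq_mul, ← Finset.mul_sum]
  ring

private theorem double_sum_sq {n : ℕ} {A : Type*} [CommRing A] (f : Fin n → A) :
    ∑ i, ∑ j, (f i + f j)^2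
      = 2*(n:A)*(∑ i, f i^2) + 2*(∑ i, f i)^2 := by
  have h : ∀ i j, (f i + f j)^2 = f i^2 + (2*f i)*f j + f j^2 := fun i j => by ring
  simp_rw [h, Finset.sum_add_distrib, ← Finset.mul_sum, Finset.sum_const, Finset.card_univ,
    Fintype.card_fin, nsmul_eq_mul, ← Finset.sum_mul, ← Finset.mul_sum]
  ring

private theorem double_sum_cube {n : ℕ} {A : Type*} [CommRing A] (f : Fin n → A) :
    ∑ i, ∑ j, (f i + f j)^3
      = 2*(n:A)*(∑ i, f i^3) + 6*(∑ i, f i)*(∑ i, f i^2) := by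
  have h : ∀ i j, (f i + f j)^3 = f i^3 + (3*f i^2)*f j + (3*f i)*f j^2 + f j^3 :=
    fun i j => by ring
  simp_rw [h, Finset.sum_add_distrib, ← Finset.mul_sum, Finset.sum_const, Finset.card_univ,
    Fintype.card_fin, nsmul_eq_mul, ← Finset.sum_mul, ← Finset.mul_sum]
  ring

/-- The key polynomial identity over `ℤ`. -/
private theorem key_poly (n : ℕ) :
    ∃ W : MvPolynomial (Fin n) ℤ,
      esymm3 ((Finset.univ : Finset (Fin n × Fin n)).filter (fun p => p.1 < p.2))
          (fun p => X p.1 + X p.2)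
        = ((n : ℤ) - 4) • esymm3 (Finset.univ : Finset (Fin n)) X
          + (∑ i, X i) * W := by
  classical
  set R := MvPolynomial (Fin n) ℤ with hR
  have two : (2 : R) ≠ 0 := by norm_num
  have six : (6 : R) ≠ 0 := by norm_num
  set S1 : R := ∑ i, X i with hS1
  set S2 : R := ∑ i, (X i : R)^2 with hS2
  set S3 : R := ∑ i, (X i : R)^3 with hS3
  set s : Finset (Fin n × Fin n) :=
    (Finset.univ : Finset (Fin n × Fin n)).filter (fun p => p.1 < p.2) with hs
  -- power sums of the pair roots
  have hP1 : ∑ p ∈ s, (X p.1 + X p.2 : R) = ((n:R) - 1) * S1 := by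
    apply mul_left_cancel₀ two
    have hd := pair_split (A := R) (fun i j => X i + X j) (fun i j => by ring)
    rw [double_sum_one] at hd
    have hdiag : ∑ i, (X i + X i : R) = 2 * S1 := by
      rw [hS1, Finset.mul_sum]; apply Finset.sum_congr rfl; intros; ring
    rw [hdiag] at hd
    rw [hs]
    linear_combination hd
  have hP2 : ∑ p ∈ s, (X p.1 + X p.2 : R)^2 = ((n:R) - 2) * S2 + S1^2 := by
    apply mul_left_cancel₀ two
    have hd := pair_split (A := R) (fun i j => (X i + X j)^2) (fun i j => by ring)
    rw [double_sum_sq] at hd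
    have hdiag : ∑ i, ((X i + X i : R))^2 = 4 * S2 := by
      rw [hS2, Finset.mul_sum]; apply Finset.sum_congr rfl; intros; ring
    rw [hdiag] at hd
    rw [hs]
    linear_combination hd
  have hP3 : ∑ p ∈ s, (X p.1 + X p.2 : R)^3 = ((n:R) - 4) * S3 + 3 * S1 * S2 := by
    apply mul_left_cancel₀ two
    have hd := pair_split (A := R) (fun i j => (X i + X j)^3) (fun i j => by ring)
    rw [double_sum_cube] at hd
    have hdiag : ∑ i, ((X i + X i : R))^3 = 8 * S3 := by
      rw [hS3, Finset.mul_sum]; apply Finset.sum_congr rfl; intros; ring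
    rw [hdiag] at hd
    rw [hs]
    linear_combination hd
  -- Newton for the pair roots (via the subtype)
  have hN' : 6 * esymm3 s (fun p => (X p.1 + X p.2 : R))
      = (((n:R) - 1) * S1)^3
        - 3*(((n:R) - 1) * S1)*(((n:R) - 2) * S2 + S1^2)
        + 2*(((n:R) - 4) * S3 + 3 * S1 * S2) := by
    have h := newton6 (ι := {p // p ∈ s}) (A := R) (fun q => X q.val.1 + X q.val.2)
    rw [esymm3_subtype s (fun p => (X p.1 + X p.2 : R))] at h
    rw [psum_subtype s (fun p => (X p.1 + X p.2 : R)),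
      psum_subtype s (fun p => (X p.1 + X p.2 : R)^2),
      psum_subtype s (fun p => (X p.1 + X p.2 : R)^3)] at h
    rw [hP1, hP2, hP3] at h
    exact h
  have hN : 6 * esymm3 (Finset.univ : Finset (Fin n)) (X : Fin n → R)
      = S1^3 - 3*S1*S2 + 2*S3 := newton6 X
  have hE2 : 2 * ∑ u ∈ (Finset.univ : Finset (Fin n)).powersetCard 2, ∏ a ∈ u, (X a : R)
      = S1^2 - S2 := newton2 X
  set E2 : R := ∑ u ∈ (Finset.univ : Finset (Fin n)).powersetCard 2, ∏ a ∈ u, (X a : R)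
  -- divisibility
  obtain ⟨k, hk⟩ : (6:ℤ) ∣ ((n:ℤ)-1)*((n:ℤ)-2)*((n:ℤ)-3) := by
    have h6 : ∀ z : ZMod 6, (z-1)*(z-2)*(z-3) = 0 := by decide
    apply (ZMod.intCast_zmod_eq_zero_iff_dvd _ 6).mp
    push_cast
    exact h6 (n : ZMod 6)
  have hkR : (6 : R) * ((k : ℤ) : R) = ((n:R)-1) * ((n:R)-2) * ((n:R)-3) := by
    have := congrArg (fun z : ℤ => ((z : R))) hk
    push_cast at this
    linear_combination -this
  refine ⟨((n:R) - 2)^2 * E2 + ((k : ℤ) : R) * S1^2, ?_⟩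
  apply mul_left_cancel₀ six
  rw [zsmul_eq_mul]
  have hcast : (((n:ℤ) - 4 : ℤ) : R) = (n : R) - 4 := by push_cast; ring
  rw [hcast]
  linear_combination hN' - ((n:R)-4)*hN - 3*((n:R)-2)^2*S1*hE2 - S1^3*hkR

/-- Splitting principle computation: if `V` is an `SU(n)` bundle with Chern roots
`x 1, …, x n` satisfying `∑ x i = 0` (i.e. `c1(V) = 0`), then `∧²V` has Chern
roots `x i + x j` for `i < j`, and its third Chern class satisfies
`c3(∧²V) = (n − 4) · c3(V)`. -/
theorem c3_wedge2
    {A : Type*} [CommRing A] (n : ℕ) (x : Fin n → A)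
    (hsum : ∑ i, x i = 0) :
    esymm3 ((Finset.univ : Finset (Fin n × Fin n)).filter (fun p => p.1 < p.2))
        (fun p => x p.1 + x p.2)
      = ((n : ℤ) - 4) • esymm3 (Finset.univ : Finset (Fin n)) x := by
  obtain ⟨W, hW⟩ := key_poly n
  have h := congrArg (aeval x) hW
  simp only [esymm3, map_add, map_mul, map_sum, map_prod, map_zsmul, aeval_X, map_pow] at h
  rw [hsum, zero_mul, add_zero] at h
  simpa [esymm3] using h
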